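/- (Theorem 2(iii), fluid model) Suppose (λ_a+2λ_b)/(2μ_b) ≤ T ≤ λ_a/(2μ_a) + λ_b/μ_b. Set t_b := T − λ_b/μ_b. Define F_a ≡ 1 on [0,T], and F_b(t) = 0 for t ∈ [0,t_b), F_b(t) = (μ_b/λ_b)(t − t_b) for t ∈ [t_b,T]. Then: 0 < t_b < T; F_b(T) = 1; and with q_0 = λ_a/2 one has q_b(t) = λ_a − μ_b t_b for all t ∈ [t_b,T] with λ_a − μ_b t_b ≤ q_0, q_b(t) = λ_a − μ_b t ≥ λ_a − μ_b t_b for all t ∈ (0,t_b), and q_a(t) ≥ q_0 for all t ∈ (0,T]. Consequently (F_a,F_b) is a Nash equilibrium of the fluid arrival game. -/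

import Mathlib

/-- Extension of a cdf `F` defined on `[0,T]` to all of `ℝ`. -/
noncomputable def Fext (T : ℝ) (F : ℝ → ℝ) (t : ℝ) : ℝ :=
  if t < 0 then 0 else if t ≤ T then F t else F T

/-- Support of the Borel measure on `[0,T]` induced by the cdf `F`:
points every neighbourhood of which carries positive mass. -/
def fluidSupport (T : ℝ) (F : ℝ → ℝ) : Set ℝ :=
  {t | t ∈ Set.Icc 0 T ∧ ∀ ε > 0, Fext T F (t - ε) < Fext T F (t + ε)}

/-- Queue (cost) faced by a belief-`mu` customer arriving at time `t`:
`q_0 = (λ_a F_a(0) + λ_b F_b(0))/2` at the opening, and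
`q(t) = λ_a F_a(t) + λ_b F_b(t) - μ t` for `t > 0`. -/
noncomputable def cost (la lb mu : ℝ) (Fa Fb : ℝ → ℝ) (t : ℝ) : ℝ :=
  if t = 0 then (la * Fa 0 + lb * Fb 0) / 2
  else la * Fa t + lb * Fb t - mu * t

/-- Nash equilibrium of the fluid arrival game: on the support of its own arrival
distribution each type's queue is minimal over all times in `[0,T]`. -/
def IsFluidNash (la lb mua mub T : ℝ) (Fa Fb : ℝ → ℝ) : Prop :=
  (∀ t ∈ fluidSupport T Fa, ∀ s ∈ Set.Icc 0 T,
    cost la lb mua Fa Fb t ≤ cost la lb mua Fa Fb s) ∧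
  (∀ t ∈ fluidSupport T Fb, ∀ s ∈ Set.Icc 0 T,
    cost la lb mub Fa Fb t ≤ cost la lb mub Fa Fb s)


/-- Theorem 2(iii) of the fluid model: for `(λ_a+2λ_b)/(2μ_b) ≤ T ≤ λ_a/(2μ_a)+λ_b/μ_b`,
all type-`a` customers arrive at `0`, and type-`b` customers arrive with density
`μ_b/λ_b` on `[t_b,T]` where `t_b = T - λ_b/μ_b`; this is a Nash equilibrium. -/
theorem fluid_equilibrium_case_iii
    (la lb mua mub T tb : ℝ)
    (hla : 0 < la) (hlb : 0 < lb) (hmua : 0 < mua) (hmu : mua < mub)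
    (hT1 : (la + 2 * lb) / (2 * mub) ≤ T) (hT2 : T ≤ la / (2 * mua) + lb / mub)
    (htb : tb = T - lb / mub)
    (Fa Fb : ℝ → ℝ)
    (hFa : ∀ t ∈ Set.Icc (0:ℝ) T, Fa t = 1)
    (hFb1 : ∀ t ∈ Set.Icc (0:ℝ) T, t < tb → Fb t = 0)
    (hFb2 : ∀ t ∈ Set.Icc (0:ℝ) T, tb ≤ t → Fb t = (mub / lb) * (t - tb)) :
    0 < tb ∧ tb < T ∧ Fb T = 1 ∧
    (la * Fa 0 + lb * Fb 0) / 2 = la / 2 ∧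
    (∀ t ∈ Set.Icc tb T,
      la * Fa t + lb * Fb t - mub * t = la - mub * tb) ∧
    la - mub * tb ≤ la / 2 ∧
    (∀ t ∈ Set.Ioo (0:ℝ) tb,
      la * Fa t + lb * Fb t - mub * t = la - mub * t ∧
      la - mub * tb ≤ la - mub * t) ∧
    (∀ t ∈ Set.Ioc (0:ℝ) T,
      la / 2 ≤ la * Fa t + lb * Fb t - mua * t) ∧
    IsFluidNash la lb mua mub T Fa Fb := by
  have hmub : (0:ℝ) < mub := hmua.trans hmu
  have hA : la + 2*lb ≤ 2*mub*T := by
    rw [div_le_iff₀ (by positivity)] at hT1; linarith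
  have hC : mub * tb = mub * T - lb := by
    rw [htb]; field_simp
  have hB : 2*mua*mub*T ≤ mub*la + 2*mua*lb := by
    have h := mul_le_mul_of_nonneg_left hT2
      (le_of_lt (by positivity : (0:ℝ) < 2*mua*mub))
    have e : 2*mua*mub*(la/(2*mua) + lb/mub) = mub*la + 2*mua*lb := by
      field_simp
    linarith [e ▸ h]
  have htbT : tb < T := by
    rw [htb]; linarith [div_pos hlb hmub]
  have htbpos : 0 < tb := by
    by_contra h; push_neg at h; nlinarith
  have hT0 : 0 < T := htbpos.trans htbT
  have hmuatb : mua * tb ≤ la / 2 := by nlinarith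
  have hFa0 : Fa 0 = 1 := hFa 0 ⟨le_refl _, hT0.le⟩
  have hFb0 : Fb 0 = 0 := hFb1 0 ⟨le_refl _, hT0.le⟩ htbpos
  have hFbT : Fb T = 1 := by
    rw [hFb2 T ⟨hT0.le, le_refl _⟩ htbT.le, htb]; field_simp; ring
  have hq0 : (la * Fa 0 + lb * Fb 0) / 2 = la / 2 := by
    rw [hFa0, hFb0]; ring
  -- lb * Fb t = mub * (t - tb) on [tb, T]
  have hFbval : ∀ t ∈ Set.Icc tb T, lb * Fb t = mub * (t - tb) := by
    intro t ht
    rw [hFb2 t ⟨htbpos.le.trans ht.1, ht.2⟩ ht.1]; field_simp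
  have hIcc : ∀ t ∈ Set.Icc tb T,
      la * Fa t + lb * Fb t - mub * t = la - mub * tb := by
    intro t ht
    rw [hFa t ⟨htbpos.le.trans ht.1, ht.2⟩, hFbval t ht]; ring
  have hhalf : la - mub * tb ≤ la / 2 := by linarith
  have hIoo : ∀ t ∈ Set.Ioo (0:ℝ) tb,
      la * Fa t + lb * Fb t - mub * t = la - mub * t ∧
      la - mub * tb ≤ la - mub * t := by
    intro t ht
    have htT : t ∈ Set.Icc (0:ℝ) T := ⟨ht.1.le, ht.2.le.trans htbT.le⟩
    rw [hFa t htT, hFb1 t htT ht.2]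
    constructor
    · ring
    · nlinarith [ht.2.le]
  have hqa : ∀ t ∈ Set.Ioc (0:ℝ) T,
      la / 2 ≤ la * Fa t + lb * Fb t - mua * t := by
    intro t ht
    have htT : t ∈ Set.Icc (0:ℝ) T := ⟨ht.1.le, ht.2⟩
    rw [hFa t htT]
    rcases lt_or_ge t tb with h | h
    · rw [hFb1 t htT h]
      nlinarith
    · rw [hFbval t ⟨h, ht.2⟩]
      nlinarith [mul_nonneg (sub_nonneg.2 hmu.le) (sub_nonneg.2 h)]
  -- cost of b on [0,T] is at least la - mub*tb
  have hcostb : ∀ s ∈ Set.Icc (0:ℝ) T,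
      la - mub * tb ≤ cost la lb mub Fa Fb s := by
    intro s hs
    rcases eq_or_ne s 0 with rfl | hne
    · rw [cost, if_pos rfl, hq0]; linarith
    · rw [cost, if_neg hne]
      have hspos : 0 < s := lt_of_le_of_ne hs.1 (Ne.symm hne)
      rcases lt_or_ge s tb with h | h
      · exact (hIoo s ⟨hspos, h⟩).2.trans_eq (hIoo s ⟨hspos, h⟩).1.symm
      · exact (hIcc s ⟨h, hs.2⟩).ge
  have hFextA : ∀ u : ℝ, 0 ≤ u → Fext T Fa u = 1 := by
    intro u hu
    unfold Fext
    split_ifs with h1 h2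
    · linarith
    · exact hFa u ⟨hu, h2⟩
    · exact hFa T ⟨hT0.le, le_refl _⟩
  have hFextB : ∀ u : ℝ, u < tb → Fext T Fb u = 0 := by
    intro u hu
    unfold Fext
    split_ifs with h1 h2
    · rfl
    · exact hFb1 u ⟨le_of_not_gt h1, h2⟩ hu
    · linarith
  refine ⟨htbpos, htbT, hFbT, hq0, hIcc, hhalf, hIoo, hqa, ?_, ?_⟩
  · -- type a
    rintro t ⟨⟨ht0, htT⟩, hsupp⟩ s hs
    have ht : t = 0 := by
      by_contra hne
      have htpos : 0 < t := lt_of_le_of_ne ht0 (Ne.symm hne)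
      have h := hsupp (t/2) (by positivity)
      rw [show t - t/2 = t/2 by ring, hFextA (t/2) (by positivity),
        hFextA (t + t/2) (by linarith)] at h
      exact lt_irrefl _ h
    subst ht
    rw [cost, if_pos rfl, hq0]
    rcases eq_or_ne s 0 with rfl | hne
    · rw [cost, if_pos rfl, hq0]
    · rw [cost, if_neg hne]
      exact hqa s ⟨lt_of_le_of_ne hs.1 (Ne.symm hne), hs.2⟩
  · -- type b
    rintro t ⟨⟨ht0, htT⟩, hsupp⟩ s hs
    have ht : tb ≤ t := by
      by_contra hne
      push_neg at hne
      have h := hsupp ((tb - t)/2) (by linarith)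
      rw [hFextB _ (by linarith), hFextB _ (by linarith)] at h
      exact lt_irrefl _ h
    have htpos : 0 < t := htbpos.trans_le ht
    rw [cost, if_neg htpos.ne', hIcc t ⟨ht, htT⟩]
    exact hcostb s hs
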